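/- For every Δ > 1 and every finite discrete interval Λ ⊂ ℤ, one has (1 − 1/Δ) W^Λ ≤ H_0^Λ as self-adjoint operators on H_Λ. Consequently, if λ > 0 and ω_i ≥ 0 for all i ∈ Λ, then (1 − 1/Δ) W^Λ ≤ H^Λ. -/

import Mathlib

open scoped BigOperators ENNReal
open MeasureTheory

noncomputable section

namespace XXZ

/-- A (finite) discrete interval: a set of integers closed under betweenness. -/
def IsInterval (A : Finset ℤ) : Prop :=
  ∀ x ∈ A, ∀ y ∈ A, ∀ z : ℤ, x ≤ z → z ≤ y → z ∈ A

/-- distance between two finite subsets of ℤ (junk value 0 if one is empty). -/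
def fdist (A B : Finset ℤ) : ℝ :=
  sInf ((fun p : ℤ × ℤ => |(p.1 : ℝ) - (p.2 : ℝ)|) '' ↑(A ×ˢ B))

/-- `[M]_s^Λ`, the `s`-neighborhood of `M` inside `Λ`. -/
def thick (Λ M : Finset ℤ) (s : ℕ) : Finset ℤ :=
  Λ.filter fun x => ∃ y ∈ M, (x - y).natAbs ≤ s

/-- `[M]_{-s}^Λ = {x ∈ M : dist(x, Λ\M) > s}`. -/
def innerThick (Λ M : Finset ℤ) (s : ℕ) : Finset ℤ :=
  M.filter fun x => ∀ y ∈ Λ \ M, (s : ℤ) < |x - y|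

/-- `∂_s^Λ M = [M]_s^Λ \ [M]_{-s}^Λ`. -/
def bdry (Λ M : Finset ℤ) (s : ℕ) : Finset ℤ := thick Λ M s \ innerThick Λ M s

/-- number of connected components of `A` (as a subset of an interval `Λ ⊆ ℤ`). -/
def numComponents (A : Finset ℤ) : ℕ := (A.filter fun x => x - 1 ∉ A).card

/-- spin configurations over `Λ`; `true` at a site means a particle (spin down). -/
abbrev Cfg (Λ : Finset ℤ) := (↥Λ) → Bool

/-- the Hilbert space `⨂_{i∈Λ} ℂ²`, realized as `ℓ²` of configurations. -/
abbrev HS (Λ : Finset ℤ) := EuclideanSpace ℂ (Cfg Λ)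

abbrev Op (Λ : Finset ℤ) := HS Λ →L[ℂ] HS Λ

abbrev Mat (Λ : Finset ℤ) := Matrix (Cfg Λ) (Cfg Λ) ℂ

variable (Λ : Finset ℤ)

def toOp (M : Mat Λ) : Op Λ := Matrix.toEuclideanCLM (𝕜 := ℂ) M

def toMat (T : Op Λ) : Mat Λ := (Matrix.toEuclideanCLM (𝕜 := ℂ)).symm T

/-- the local number operator `𝒩_i` (the copy of `½(1−σ^z)` at site `i`). -/
def NMat (i : ℤ) : Mat Λ :=
  Matrix.diagonal fun σ => if h : i ∈ Λ then (if σ ⟨i, h⟩ then 1 else 0) else 0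

def NOp (i : ℤ) : Op Λ := toOp Λ (NMat Λ i)

/-- `P_+^S`: orthogonal projection onto states with no particles in `S`. -/
def PplusMat (S : Finset ℤ) : Mat Λ :=
  Matrix.diagonal fun σ => if ∀ i : ↥Λ, (i : ℤ) ∈ S → σ i = false then 1 else 0

def Pplus (S : Finset ℤ) : Op Λ := toOp Λ (PplusMat Λ S)

/-- `P_-^S = 1 - P_+^S`. -/
def Pminus (S : Finset ℤ) : Op Λ := 1 - Pplus Λ S

/-- the configuration with the values at `i` and `i+1` exchanged. -/
def swapCfg (i : ℤ) (σ : Cfg Λ) : Cfg Λ := fun j =>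
  if (j : ℤ) = i then (if h : i + 1 ∈ Λ then σ ⟨i + 1, h⟩ else σ j)
  else if (j : ℤ) = i + 1 then (if h : i ∈ Λ then σ ⟨i, h⟩ else σ j)
  else σ j

/-- the hopping term `σ_i^+σ_{i+1}^- + σ_i^-σ_{i+1}^+`. -/
def hopMat (i : ℤ) : Mat Λ := fun σ τ =>
  if hi : i ∈ Λ then
    if hi1 : i + 1 ∈ Λ then
      (if τ ⟨i, hi⟩ ≠ τ ⟨i + 1, hi1⟩ ∧ σ = swapCfg Λ i τ then 1 else 0)
    else 0
  else 0

/-- `h_{i,i+1} = -𝒩_i 𝒩_{i+1} - (2Δ)⁻¹ (σ_i^+σ_{i+1}^- + σ_i^-σ_{i+1}^+)`. -/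
def hMat (Δ : ℝ) (i : ℤ) : Mat Λ :=
  -(NMat Λ i * NMat Λ (i + 1)) - ((2 * Δ : ℂ))⁻¹ • hopMat Λ i

/-- the XXZ Hamiltonian on a subset `S ⊆ Λ`, acting on `H_Λ`:
`Σ_{{i,i+1}⊆S} h_{i,i+1} + Σ_{i∈S} 𝒩_i + λ Σ_{i∈S} ω_i 𝒩_i`. -/
def HonMat (Δ lam : ℝ) (ω : ℤ → ℝ) (S : Finset ℤ) : Mat Λ :=
  (∑ i ∈ S.filter (fun i => i + 1 ∈ S), hMat Λ Δ i)
    + (∑ i ∈ S, NMat Λ i)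
    + (lam : ℂ) • (∑ i ∈ S, (ω i : ℂ) • NMat Λ i)

/-- the random XXZ Hamiltonian `H^Λ = H_0^Λ + λ Σ_{i∈Λ} ω_i 𝒩_i`. -/
def HOp (Δ lam : ℝ) (ω : ℤ → ℝ) : Op Λ := toOp Λ (HonMat Λ Δ lam ω Λ)

/-- the free Hamiltonian `H_0^Λ`. -/
def H0Op (Δ : ℝ) : Op Λ :=
  toOp Λ ((∑ i ∈ Λ.filter (fun i => i + 1 ∈ Λ), hMat Λ Δ i) + ∑ i ∈ Λ, NMat Λ i)

/-- the decoupled Hamiltonian `H^{A,A^c} = H^A + H^{A^c}` on `H_Λ`. -/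
def HdecOp (Δ lam : ℝ) (ω : ℤ → ℝ) (A : Finset ℤ) : Op Λ :=
  toOp Λ (HonMat Λ Δ lam ω A + HonMat Λ Δ lam ω (Λ \ A))

/-- the number-of-clusters operator `W^Λ = 𝒩^Λ - Σ 𝒩_i 𝒩_{i+1}`. -/
def WOp : Op Λ :=
  toOp Λ ((∑ i ∈ Λ, NMat Λ i)
    - ∑ i ∈ Λ.filter (fun i => i + 1 ∈ Λ), NMat Λ i * NMat Λ (i + 1))

/-- total number operator `𝒩^Λ`. -/
def NtotOp : Op Λ := toOp Λ (∑ i ∈ Λ, NMat Λ i)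

/-- spectral projection `χ_I(T)` (via the continuous functional calculus;
for a self-adjoint `T` the spectrum is finite, so every function is continuous on it). -/
def specProj (T : Op Λ) (I : Set ℝ) : Op Λ :=
  cfc (fun x : ℝ => I.indicator (fun _ => (1 : ℝ)) x) T

/-- `f(T)` for a real-valued (Borel) function `f`. -/
def opFun (T : Op Λ) (f : ℝ → ℝ) : Op Λ := cfc f T

/-- resolvent `(T - z)⁻¹` (junk value `0` when not invertible). -/
def res (T : Op Λ) (z : ℂ) : Op Λ := Ring.inverse (T - z • 1)

/-- the unitary `e^{itT}`. -/
def uexp (T : Op Λ) (t : ℝ) : Op Λ := NormedSpace.exp ((Complex.I * (t : ℂ)) • T)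

/-- Heisenberg evolution `τ_t(T) = e^{itH} T e^{-itH}`. -/
def heis (H : Op Λ) (t : ℝ) (T : Op Λ) : Op Λ := uexp Λ H t * T * uexp Λ H (-t)

/-- the deformed Hamiltonian `Ĥ_k^Λ`. -/
def Hhat (Δ lam : ℝ) (ω : ℤ → ℝ) (k : ℕ) : Op Λ :=
  if k = 0 then HOp Λ Δ lam ω + ((1 - 1 / Δ : ℝ) : ℂ) • specProj Λ (WOp Λ) {0}
  else HOp Λ Δ lam ω + ((k * (1 - 1 / Δ) : ℝ) : ℂ) •
    (specProj Λ (WOp Λ) (Set.Icc 1 k)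
      + (((k + 1 : ℝ) / k : ℝ) : ℂ) • specProj Λ (WOp Λ) {0})

/-- support predicate, on matrices: `M` acts as `M_A ⊗ I_{A^c}`. -/
def MatSupportedOn (M : Mat Λ) (A : Finset ℤ) : Prop :=
  (∀ σ τ : Cfg Λ, M σ τ ≠ 0 → ∀ i : ↥Λ, (i : ℤ) ∉ A → σ i = τ i) ∧
  (∀ σ τ σ' τ' : Cfg Λ,
    (∀ i : ↥Λ, (i : ℤ) ∈ A → (σ i = σ' i ∧ τ i = τ' i)) →
    (∀ i : ↥Λ, (i : ℤ) ∉ A → (σ i = τ i ∧ σ' i = τ' i)) → M σ τ = M σ' τ')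

/-- an observable on `H_Λ` is supported on `A ⊆ Λ` if it has the form `T_A ⊗ I`. -/
def SupportedOn (T : Op Λ) (A : Finset ℤ) : Prop := MatSupportedOn Λ (toMat Λ T) A

/-- the rank-one projection `π_M` onto the canonical basis vector `φ_M`. -/
def piProj (M : Finset ℤ) : Op Λ :=
  toOp Λ (Matrix.diagonal fun σ => if σ = (fun i : ↥Λ => decide ((i : ℤ) ∈ M)) then 1 else 0)

/-- the all-spins-up vacuum vector `Ω_Λ`. -/
def vac : HS Λ := EuclideanSpace.single (fun _ => false) 1

/-- extension of a field on `Λ` to `ℤ` by zero. -/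
def extend (ω : ↥Λ → ℝ) : ℤ → ℝ := fun i => if h : i ∈ Λ then ω ⟨i, h⟩ else 0

/-- expectation with respect to the i.i.d. field `{ω_i}_{i∈Λ}` with single-site measure `μ`. -/
def expec (μ : Measure ℝ) (F : (ℤ → ℝ) → ℝ) : ℝ :=
  ∫ ω : ↥Λ → ℝ, F (extend Λ ω) ∂(Measure.pi fun _ => μ)

/-- Borel functions vanishing outside `J` and bounded by `1`. -/
def B1 (J : Set ℝ) : Set (ℝ → ℝ) :=
  {f | Measurable f ∧ (∀ x, x ∉ J → f x = 0) ∧ ∀ x, |f x| ≤ 1}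

/-- `⟨t⟩ = (1+t²)^{1/2}`. -/
def jap (t : ℝ) : ℝ := Real.sqrt (1 + t ^ 2)

/-- the assumptions on the single-site distribution `μ`: a probability measure,
absolutely continuous with bounded density, with `{0,1} ⊆ supp μ ⊆ [0,1]`. -/
structure SingleSite (μ : Measure ℝ) : Prop where
  prob : IsProbabilityMeasure μ
  ac : μ ≪ volume
  bounded : ∃ C : ℝ≥0∞, C ≠ ⊤ ∧ ∀ᵐ x ∂volume, μ.rnDeriv volume x ≤ C
  supp_sub : μ (Set.Icc 0 1) = 1
  zero_mem : ∀ ε > 0, 0 < μ (Set.Ioo (-ε) ε)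
  one_mem : ∀ ε > 0, 0 < μ (Set.Ioo (1 - ε) (1 + ε))

/-- Condition `L_r`: quasi-locality (localization) on the energy interval
`Ǐ_{≤r} = (-∞, (r+7/8)(1-1/Δ)]`, with constants `ξ_r, θ_r` (and some `F_r`). -/
def ConditionL (μ : Measure ℝ) (Δ₀ lam0 Δ lam r ξ θ : ℝ) : Prop :=
  Δ₀ ≤ Δ ∧ lam0 ≤ lam ∧ 0 < ξ ∧ 0 < θ ∧
  ∃ F : ℝ, 0 < F ∧
    ∀ Λ : Finset ℤ, Λ.Nonempty → IsInterval Λ →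
    ∀ A B : Finset ℤ, A ⊆ B → B ⊆ Λ → IsInterval A →
      (expec Λ μ (fun ω =>
          ⨆ f ∈ B1 (Set.Iic ((r + 7 / 8) * (1 - 1 / Δ))),
            ‖Pminus Λ A * opFun Λ (HOp Λ Δ lam ω) f * Pplus Λ B‖)
        ≤ F * (Λ.card : ℝ) ^ ξ * Real.exp (-θ * fdist A (Λ \ B))) ∧
      ∀ z : ℂ, z.re ≤ (r + 7 / 8) * (1 - 1 / Δ) →
        expec Λ μ (fun ω =>
            ‖Pminus Λ A * res Λ (HOp Λ Δ lam ω) z * Pplus Λ B‖ ^ ((1 : ℝ) / 4))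
          ≤ F * (Λ.card : ℝ) ^ ξ * Real.exp (-θ * fdist A (Λ \ B))

/-- `β_{n/2}`:  `β_0 = 0`,  `β_q = β_{q-1/2} + 9⌈q⌉ + 13`. -/
def betaN : ℕ → ℕ
  | 0 => 0
  | n + 1 => betaN n + 9 * ((n + 2) / 2) + 13

end XXZ

namespace XXZ

open Matrix

variable (Λ : Finset ℤ)

/-- occupation number of site `i` in configuration `σ`, as a real number. -/
def occ (σ : Cfg Λ) (i : ℤ) : ℝ :=
  if h : i ∈ Λ then (if σ ⟨i, h⟩ then 1 else 0) else 0

lemma occ_nonneg (σ : Cfg Λ) (i : ℤ) : 0 ≤ occ Λ σ i := by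
  unfold occ; split_ifs <;> norm_num

lemma NMat_eq_diagonal (i : ℤ) :
    NMat Λ i = Matrix.diagonal (fun σ => ((occ Λ σ i : ℝ) : ℂ)) := by
  unfold NMat occ
  refine congrArg _ (funext fun σ => ?_)
  split_ifs <;> simp

/-- the quadratic form `M ↦ ⟨v, M v⟩` as a linear functional. -/
def qlin (v : Cfg Λ → ℂ) : Mat Λ →ₗ[ℂ] ℂ where
  toFun M := dotProduct (star v) (Matrix.mulVec M v)
  map_add' M N := by simp [Matrix.add_mulVec, dotProduct_add]
  map_smul' c M := by simp [Matrix.smul_mulVec, dotProduct_smul]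

lemma qlin_diag (v : Cfg Λ → ℂ) (d : Cfg Λ → ℝ) :
    (qlin Λ v (Matrix.diagonal fun σ => ((d σ : ℝ) : ℂ))).re
      = ∑ σ : Cfg Λ, d σ * Complex.normSq (v σ) := by
  unfold qlin
  simp only [LinearMap.coe_mk, AddHom.coe_mk, dotProduct, Matrix.mulVec_diagonal,
    Pi.star_apply]
  rw [Complex.re_sum]
  refine Finset.sum_congr rfl fun σ _ => ?_
  have h : (starRingEnd ℂ) (v σ) * (((d σ : ℝ) : ℂ) * v σ)
      = ((d σ : ℝ) : ℂ) * ((starRingEnd ℂ) (v σ) * v σ) := by ring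
  rw [RCLike.star_def, h, ← Complex.normSq_eq_conj_mul_self]
  push_cast
  simp

end XXZ

namespace XXZ

variable (Λ : Finset ℤ)

lemma swap_fst {i : ℤ} (hi : i ∈ Λ) (hi1 : i + 1 ∈ Λ) (τ : Cfg Λ) :
    swapCfg Λ i τ ⟨i, hi⟩ = τ ⟨i + 1, hi1⟩ := by
  unfold swapCfg; simp [hi1]

lemma swap_snd {i : ℤ} (hi : i ∈ Λ) (hi1 : i + 1 ∈ Λ) (τ : Cfg Λ) :
    swapCfg Λ i τ ⟨i + 1, hi1⟩ = τ ⟨i, hi⟩ := by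
  unfold swapCfg
  have : (i + 1 : ℤ) ≠ i := by omega
  simp [this, hi]

lemma swap_other {i : ℤ} (τ : Cfg Λ) (j : ↥Λ) (h1 : (j : ℤ) ≠ i) (h2 : (j : ℤ) ≠ i + 1) :
    swapCfg Λ i τ j = τ j := by
  unfold swapCfg; simp [h1, h2]

lemma swap_invol {i : ℤ} (hi : i ∈ Λ) (hi1 : i + 1 ∈ Λ) :
    Function.Involutive (swapCfg Λ i) := by
  intro τ
  funext j
  rcases eq_or_ne (j : ℤ) i with h | h
  · have hj : j = ⟨i, hi⟩ := Subtype.ext h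
    subst hj
    rw [swap_fst Λ hi hi1, swap_snd Λ hi hi1]
  · rcases eq_or_ne (j : ℤ) (i + 1) with h2 | h2
    · have hj : j = ⟨i + 1, hi1⟩ := Subtype.ext h2
      subst hj
      rw [swap_snd Λ hi hi1, swap_fst Λ hi hi1]
    · rw [swap_other Λ _ j h h2, swap_other Λ _ j h h2]

lemma swap_mixed {i : ℤ} (hi : i ∈ Λ) (hi1 : i + 1 ∈ Λ) (τ : Cfg Λ) :
    (swapCfg Λ i τ ⟨i, hi⟩ ≠ swapCfg Λ i τ ⟨i + 1, hi1⟩) ↔ (τ ⟨i, hi⟩ ≠ τ ⟨i + 1, hi1⟩) := by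
  rw [swap_fst Λ hi hi1, swap_snd Λ hi hi1]
  exact ne_comm

end XXZ

namespace XXZ

variable (Λ : Finset ℤ)

lemma re_conj_mul_le (a b : ℂ) :
    ((starRingEnd ℂ) a * b).re ≤ (Complex.normSq a + Complex.normSq b) / 2 := by
  simp only [Complex.mul_re, Complex.conj_re, Complex.conj_im, Complex.normSq_apply]
  nlinarith [sq_nonneg (a.re - b.re), sq_nonneg (a.im - b.im)]

lemma qlin_hop (i : ℤ) (hi : i ∈ Λ) (hi1 : i + 1 ∈ Λ) (v : Cfg Λ → ℂ) :
    qlin Λ v (hopMat Λ i)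
      = ∑ τ : Cfg Λ, if τ ⟨i, hi⟩ ≠ τ ⟨i + 1, hi1⟩
          then (starRingEnd ℂ) (v (swapCfg Λ i τ)) * v τ else 0 := by
  unfold qlin hopMat
  simp only [LinearMap.coe_mk, AddHom.coe_mk, dotProduct, Matrix.mulVec,
    Pi.star_apply, RCLike.star_def, dif_pos hi, dif_pos hi1]
  simp_rw [Finset.mul_sum]
  rw [Finset.sum_comm]
  refine Finset.sum_congr rfl fun τ _ => ?_
  by_cases hP : τ ⟨i, hi⟩ ≠ τ ⟨i + 1, hi1⟩
  · rw [if_pos hP]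
    have : ∀ σ : Cfg Λ, (starRingEnd ℂ) (v σ)
          * ((if τ ⟨i, hi⟩ ≠ τ ⟨i + 1, hi1⟩ ∧ σ = swapCfg Λ i τ then 1 else 0) * v τ)
        = if σ = swapCfg Λ i τ then (starRingEnd ℂ) (v σ) * v τ else 0 := by
      intro σ
      by_cases hσ : σ = swapCfg Λ i τ
      · rw [if_pos ⟨hP, hσ⟩, if_pos hσ]; ring
      · rw [if_neg (fun h => hσ h.2), if_neg hσ]; ring
    simp_rw [this]
    rw [Finset.sum_ite_eq' Finset.univ (swapCfg Λ i τ)]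
    simp
  · rw [if_neg hP]
    push_neg at hP
    refine Finset.sum_eq_zero fun σ _ => ?_
    simp [hP]

end XXZ

namespace XXZ

variable (Λ : Finset ℤ)

lemma qlin_hop_re_le (i : ℤ) (hi : i ∈ Λ) (hi1 : i + 1 ∈ Λ) (v : Cfg Λ → ℂ) :
    (qlin Λ v (hopMat Λ i)).re
      ≤ ∑ τ : Cfg Λ, (if τ ⟨i, hi⟩ ≠ τ ⟨i + 1, hi1⟩ then Complex.normSq (v τ) else 0) := by
  have reindex :
      (∑ τ : Cfg Λ, if τ ⟨i, hi⟩ ≠ τ ⟨i + 1, hi1⟩ then Complex.normSq (v (swapCfg Λ i τ)) else 0)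
        = ∑ τ : Cfg Λ, if τ ⟨i, hi⟩ ≠ τ ⟨i + 1, hi1⟩ then Complex.normSq (v τ) else 0 := by
    refine Fintype.sum_equiv ((swap_invol Λ hi hi1).toPerm _) _ _ fun τ => ?_
    simp only [Function.Involutive.coe_toPerm]
    by_cases hP : τ ⟨i, hi⟩ ≠ τ ⟨i + 1, hi1⟩
    · rw [if_pos hP]; exact (if_pos (((swap_mixed Λ hi hi1 τ)).mpr hP)).symm
    · rw [if_neg hP]; exact (if_neg (fun h => hP ((swap_mixed Λ hi hi1 τ).mp h))).symm
  rw [qlin_hop Λ i hi hi1 v, Complex.re_sum]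
  calc ∑ τ : Cfg Λ, ((if τ ⟨i, hi⟩ ≠ τ ⟨i + 1, hi1⟩
          then (starRingEnd ℂ) (v (swapCfg Λ i τ)) * v τ else 0)).re
      ≤ ∑ τ : Cfg Λ, (if τ ⟨i, hi⟩ ≠ τ ⟨i + 1, hi1⟩
          then (Complex.normSq (v (swapCfg Λ i τ)) + Complex.normSq (v τ)) / 2 else 0) := by
        refine Finset.sum_le_sum fun τ _ => ?_
        split_ifs with h
        · exact re_conj_mul_le _ _
        · simp
    _ = ((∑ τ : Cfg Λ, if τ ⟨i, hi⟩ ≠ τ ⟨i + 1, hi1⟩ then Complex.normSq (v (swapCfg Λ i τ)) else 0)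
          + ∑ τ : Cfg Λ, if τ ⟨i, hi⟩ ≠ τ ⟨i + 1, hi1⟩ then Complex.normSq (v τ) else 0) / 2 := by
        rw [← Finset.sum_add_distrib, Finset.sum_div]
        refine Finset.sum_congr rfl fun τ _ => ?_
        split_ifs <;> ring
    _ = ∑ τ : Cfg Λ, if τ ⟨i, hi⟩ ≠ τ ⟨i + 1, hi1⟩ then Complex.normSq (v τ) else 0 := by
        rw [reindex]; ring

end XXZ

namespace XXZ

variable (Λ : Finset ℤ)

lemma ofReal_mul_re' (r : ℝ) (z : ℂ) : ((r : ℂ) * z).re = r * z.re := by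
  simp [Complex.mul_re]

lemma herm_diag_real (d : Cfg Λ → ℝ) :
    (Matrix.diagonal fun σ => ((d σ : ℝ) : ℂ)).IsHermitian :=
  Matrix.isHermitian_diagonal_of_self_adjoint _
    (funext fun σ => by simp [Pi.star_apply, Complex.conj_ofReal])

lemma NMat_herm (i : ℤ) : (NMat Λ i).IsHermitian := by
  rw [NMat_eq_diagonal]; exact herm_diag_real Λ _

lemma NN_eq_diagonal (i j : ℤ) :
    NMat Λ i * NMat Λ j
      = Matrix.diagonal (fun σ => ((occ Λ σ i * occ Λ σ j : ℝ) : ℂ)) := by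
  rw [NMat_eq_diagonal, NMat_eq_diagonal, Matrix.diagonal_mul_diagonal]
  refine congrArg _ (funext fun σ => ?_)
  push_cast; ring

lemma NN_herm (i j : ℤ) : (NMat Λ i * NMat Λ j).IsHermitian := by
  rw [NN_eq_diagonal]; exact herm_diag_real Λ _

lemma hop_herm (i : ℤ) : (hopMat Λ i).IsHermitian := by
  refine Matrix.IsHermitian.ext fun σ τ => ?_
  show star (hopMat Λ i τ σ) = hopMat Λ i σ τ
  unfold hopMat
  by_cases hi : i ∈ Λ
  · by_cases hi1 : i + 1 ∈ Λ
    · rw [dif_pos hi, dif_pos hi, dif_pos hi1, dif_pos hi1]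
      have hiff : (τ ⟨i, hi⟩ ≠ τ ⟨i + 1, hi1⟩ ∧ σ = swapCfg Λ i τ)
          ↔ (σ ⟨i, hi⟩ ≠ σ ⟨i + 1, hi1⟩ ∧ τ = swapCfg Λ i σ) := by
        constructor
        · rintro ⟨hm, rfl⟩
          exact ⟨(swap_mixed Λ hi hi1 τ).mpr hm, (swap_invol Λ hi hi1 τ).symm⟩
        · rintro ⟨hm, rfl⟩
          exact ⟨(swap_mixed Λ hi hi1 σ).mpr hm, (swap_invol Λ hi hi1 σ).symm⟩
      rw [if_congr hiff.symm rfl rfl]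
      split_ifs <;> simp
    · rw [dif_pos hi, dif_pos hi, dif_neg hi1, dif_neg hi1]; simp
  · rw [dif_neg hi, dif_neg hi]; simp

lemma herm_sum {α : Type*} (s : Finset α) (f : α → Mat Λ)
    (h : ∀ i ∈ s, (f i).IsHermitian) : (∑ i ∈ s, f i).IsHermitian := by
  unfold Matrix.IsHermitian
  rw [Matrix.conjTranspose_sum]
  exact Finset.sum_congr rfl h

lemma herm_real_smul (r : ℝ) (M : Mat Λ) (h : M.IsHermitian) :
    (((r : ℝ) : ℂ) • M).IsHermitian := by
  unfold Matrix.IsHermitian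
  rw [Matrix.conjTranspose_smul, Complex.star_def, Complex.conj_ofReal, h]

lemma hMat_herm (Δ : ℝ) (i : ℤ) : (hMat Λ Δ i).IsHermitian := by
  unfold hMat
  refine Matrix.IsHermitian.sub ((NN_herm Λ i (i + 1)).neg) ?_
  have : ((2 * (Δ : ℂ))⁻¹) = (((2 * Δ)⁻¹ : ℝ) : ℂ) := by push_cast; ring
  rw [this]
  exact herm_real_smul Λ _ _ (hop_herm Λ i)

lemma Dmat_herm (Δ lam : ℝ) (ω : ℤ → ℝ) :
    (HonMat Λ Δ lam ω Λ - ((1 - 1 / Δ : ℝ) : ℂ) •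
      ((∑ i ∈ Λ, NMat Λ i) -
        ∑ i ∈ Λ.filter (fun i => i + 1 ∈ Λ), NMat Λ i * NMat Λ (i + 1))).IsHermitian := by
  refine Matrix.IsHermitian.sub ?_ (herm_real_smul Λ _ _ ?_)
  · unfold HonMat
    refine Matrix.IsHermitian.add (Matrix.IsHermitian.add ?_ ?_) ?_
    · exact herm_sum Λ _ _ fun i _ => hMat_herm Λ Δ i
    · exact herm_sum Λ _ _ fun i _ => NMat_herm Λ i
    · refine herm_real_smul Λ lam _ (herm_sum Λ _ _ fun i _ => herm_real_smul Λ (ω i) _ (NMat_herm Λ i))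
  · exact Matrix.IsHermitian.sub (herm_sum Λ _ _ fun i _ => NMat_herm Λ i)
      (herm_sum Λ _ _ fun i _ => NN_herm Λ i (i + 1))

end XXZ

namespace XXZ

variable (Λ : Finset ℤ)

/-- indicator that the edge `{i,i+1}` has exactly one particle. -/
def mix (σ : Cfg Λ) (i : ℤ) : ℝ :=
  occ Λ σ i + occ Λ σ (i + 1) - 2 * occ Λ σ i * occ Λ σ (i + 1)

lemma ite_mixed_eq (i : ℤ) (hi : i ∈ Λ) (hi1 : i + 1 ∈ Λ) (τ : Cfg Λ) (r : ℝ) :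
    (if τ ⟨i, hi⟩ ≠ τ ⟨i + 1, hi1⟩ then r else 0) = mix Λ τ i * r := by
  unfold mix occ
  rw [dif_pos hi, dif_pos hi1]
  cases h1 : τ ⟨i, hi⟩ <;> cases h2 : τ ⟨i + 1, hi1⟩ <;> simp [h1, h2] <;> norm_num

lemma key_sum (σ : Cfg Λ) :
    ∑ i ∈ Λ.filter (fun i => i + 1 ∈ Λ), (occ Λ σ i + occ Λ σ (i + 1))
      ≤ 2 * ∑ i ∈ Λ, occ Λ σ i := by
  rw [Finset.sum_add_distrib, two_mul]
  have h1 : ∑ i ∈ Λ.filter (fun i => i + 1 ∈ Λ), occ Λ σ i ≤ ∑ i ∈ Λ, occ Λ σ i :=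
    Finset.sum_le_sum_of_subset_of_nonneg (Finset.filter_subset _ _)
      (fun i _ _ => occ_nonneg Λ σ i)
  have h2 : ∑ i ∈ Λ.filter (fun i => i + 1 ∈ Λ), occ Λ σ (i + 1) ≤ ∑ i ∈ Λ, occ Λ σ i := by
    rw [show (∑ i ∈ Λ.filter (fun i => i + 1 ∈ Λ), occ Λ σ (i + 1))
        = ∑ j ∈ (Λ.filter (fun i => i + 1 ∈ Λ)).image (· + 1), occ Λ σ j from
      (Finset.sum_image (fun a _ b _ h => by omega)).symm]
    refine Finset.sum_le_sum_of_subset_of_nonneg ?_ (fun i _ _ => occ_nonneg Λ σ i)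
    intro j hj
    simp only [Finset.mem_image, Finset.mem_filter] at hj
    obtain ⟨a, ⟨_, ha⟩, rfl⟩ := hj
    exact ha
  linarith

lemma bridge (M : Mat Λ) (x : HS Λ) :
    (toOp Λ M).reApplyInnerSelf x = (qlin Λ (WithLp.equiv 2 _ x) M).re := by
  rw [ContinuousLinearMap.reApplyInnerSelf_apply, EuclideanSpace.inner_eq_star_dotProduct]
  unfold toOp
  rw [Matrix.ofLp_toEuclideanCLM]
  unfold qlin
  simp only [LinearMap.coe_mk, AddHom.coe_mk]
  set v := WithLp.equiv 2 _ x
  have h : star (dotProduct (star v) (Matrix.mulVec M v))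
      = dotProduct (star (Matrix.mulVec M v)) v := by
    rw [← Matrix.star_dotProduct_star]
    simp
  have h' : x.ofLp ⬝ᵥ star (Matrix.mulVec M x.ofLp) = star (dotProduct (star v) (Matrix.mulVec M v)) := by
    rw [h, dotProduct_comm]; rfl
  rw [h']
  simp

end XXZ

namespace XXZ

variable (Λ : Finset ℤ)

lemma qlin_NMat_re (v : Cfg Λ → ℂ) (i : ℤ) :
    (qlin Λ v (NMat Λ i)).re = ∑ σ : Cfg Λ, occ Λ σ i * Complex.normSq (v σ) := by
  rw [NMat_eq_diagonal]; exact qlin_diag Λ v _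

lemma qlin_NN_re (v : Cfg Λ → ℂ) (i j : ℤ) :
    (qlin Λ v (NMat Λ i * NMat Λ j)).re
      = ∑ σ : Cfg Λ, occ Λ σ i * occ Λ σ j * Complex.normSq (v σ) := by
  rw [NN_eq_diagonal]; exact qlin_diag Λ v _

lemma qform_re (Δ lam : ℝ) (ω : ℤ → ℝ) (v : Cfg Λ → ℂ) :
    (qlin Λ v (HonMat Λ Δ lam ω Λ - ((1 - 1 / Δ : ℝ) : ℂ) •
        ((∑ i ∈ Λ, NMat Λ i) -
          ∑ i ∈ Λ.filter (fun i => i + 1 ∈ Λ), NMat Λ i * NMat Λ (i + 1)))).re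
      = (∑ i ∈ Λ.filter (fun i => i + 1 ∈ Λ),
            (-(∑ σ : Cfg Λ, occ Λ σ i * occ Λ σ (i + 1) * Complex.normSq (v σ))
              - (2 * Δ)⁻¹ * (qlin Λ v (hopMat Λ i)).re))
        + (∑ i ∈ Λ, ∑ σ : Cfg Λ, occ Λ σ i * Complex.normSq (v σ))
        + lam * ∑ i ∈ Λ, ω i * ∑ σ : Cfg Λ, occ Λ σ i * Complex.normSq (v σ)
        - (1 - 1 / Δ) * ((∑ i ∈ Λ, ∑ σ : Cfg Λ, occ Λ σ i * Complex.normSq (v σ))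
            - ∑ i ∈ Λ.filter (fun i => i + 1 ∈ Λ),
                ∑ σ : Cfg Λ, occ Λ σ i * occ Λ σ (i + 1) * Complex.normSq (v σ)) := by
  simp only [HonMat, hMat, map_sub, map_add, map_sum, _root_.map_smul, map_neg, smul_eq_mul]
  rw [Complex.sub_re, Complex.add_re, Complex.add_re, Complex.re_sum, Complex.re_sum]
  have hc : ((2 * (Δ : ℂ))⁻¹) = (((2 * Δ)⁻¹ : ℝ) : ℂ) := by push_cast; ring
  simp only [hc, Complex.sub_re, Complex.neg_re, ofReal_mul_re', Complex.re_sum,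
    qlin_NN_re, qlin_NMat_re]

end XXZ

namespace XXZ

variable (Λ : Finset ℤ)

lemma qform_nonneg (Δ lam : ℝ) (hΔ : 1 < Δ) (hlam : 0 ≤ lam) (ω : ℤ → ℝ)
    (hω : ∀ i ∈ Λ, 0 ≤ ω i) (v : Cfg Λ → ℂ) :
    0 ≤ (qlin Λ v (HonMat Λ Δ lam ω Λ - ((1 - 1 / Δ : ℝ) : ℂ) •
        ((∑ i ∈ Λ, NMat Λ i) -
          ∑ i ∈ Λ.filter (fun i => i + 1 ∈ Λ), NMat Λ i * NMat Λ (i + 1)))).re := by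
  have hΔ0 : (0:ℝ) < Δ := by linarith
  rw [qform_re]
  set F := Λ.filter (fun i => i + 1 ∈ Λ) with hF
  set nsq : Cfg Λ → ℝ := fun σ => Complex.normSq (v σ) with hnsq
  -- abbreviations
  set S1 : ℝ := ∑ i ∈ Λ, ∑ σ : Cfg Λ, occ Λ σ i * nsq σ with hS1
  set S2 : ℝ := ∑ i ∈ F, ∑ σ : Cfg Λ, occ Λ σ i * occ Λ σ (i + 1) * nsq σ with hS2
  set S3 : ℝ := ∑ i ∈ F, ∑ σ : Cfg Λ, mix Λ σ i * nsq σ with hS3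
  set S4 : ℝ := ∑ i ∈ Λ, ω i * ∑ σ : Cfg Λ, occ Λ σ i * nsq σ with hS4
  set Q : ℝ := ∑ i ∈ F, (qlin Λ v (hopMat Λ i)).re with hQdef
  have hsplit : (∑ i ∈ F, (-(∑ σ : Cfg Λ, occ Λ σ i * occ Λ σ (i + 1) * nsq σ)
        - (2 * Δ)⁻¹ * (qlin Λ v (hopMat Λ i)).re)) = -S2 - (2 * Δ)⁻¹ * Q := by
    rw [hS2, hQdef, Finset.mul_sum, ← Finset.sum_neg_distrib, ← Finset.sum_sub_distrib]
  rw [hsplit]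
  have hQ : Q ≤ S3 := by
    rw [hQdef, hS3]
    refine Finset.sum_le_sum fun i hi => ?_
    have hi' := Finset.mem_filter.mp hi
    refine (qlin_hop_re_le Λ i hi'.1 hi'.2 v).trans_eq ?_
    exact Finset.sum_congr rfl fun τ _ => ite_mixed_eq Λ i hi'.1 hi'.2 τ _
  have flip : ∀ (s : Finset ℤ) (g : Cfg Λ → ℤ → ℝ),
      (∑ i ∈ s, ∑ σ : Cfg Λ, g σ i * nsq σ) = ∑ σ : Cfg Λ, (∑ i ∈ s, g σ i) * nsq σ := by
    intro s g
    rw [Finset.sum_comm]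
    exact Finset.sum_congr rfl fun σ _ => (Finset.sum_mul _ _ _).symm
  have hnsq0 : ∀ σ : Cfg Λ, 0 ≤ nsq σ := fun σ => Complex.normSq_nonneg _
  have hbr : 0 ≤ 2 * S1 - 2 * S2 - S3 := by
    rw [hS1, hS2, hS3, flip Λ (fun σ i => occ Λ σ i),
      flip F (fun σ i => occ Λ σ i * occ Λ σ (i + 1)), flip F (fun σ i => mix Λ σ i)]
    rw [Finset.mul_sum, Finset.mul_sum, ← Finset.sum_sub_distrib, ← Finset.sum_sub_distrib]
    refine Finset.sum_nonneg fun σ _ => ?_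
    have hk := key_sum Λ σ
    have hEB : 2 * (∑ i ∈ F, occ Λ σ i * occ Λ σ (i + 1)) + ∑ i ∈ F, mix Λ σ i
        = ∑ i ∈ F, (occ Λ σ i + occ Λ σ (i + 1)) := by
      rw [Finset.mul_sum, ← Finset.sum_add_distrib]
      exact Finset.sum_congr rfl fun i _ => by unfold mix; ring
    have h2N : 2 * (∑ i ∈ F, occ Λ σ i * occ Λ σ (i + 1)) + ∑ i ∈ F, mix Λ σ i
        ≤ 2 * ∑ i ∈ Λ, occ Λ σ i := by rw [hEB]; exact hk
    have : 2 * ((∑ i ∈ Λ, occ Λ σ i) * nsq σ) - 2 * ((∑ i ∈ F, occ Λ σ i * occ Λ σ (i + 1)) * nsq σ)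
        - (∑ i ∈ F, mix Λ σ i) * nsq σ
        = (2 * (∑ i ∈ Λ, occ Λ σ i) - (2 * (∑ i ∈ F, occ Λ σ i * occ Λ σ (i + 1))
            + ∑ i ∈ F, mix Λ σ i)) * nsq σ := by ring
    rw [this]
    exact mul_nonneg (by linarith) (hnsq0 σ)
  have hS4' : 0 ≤ S4 := by
    rw [hS4]
    refine Finset.sum_nonneg fun i hi => mul_nonneg (hω i hi) ?_
    exact Finset.sum_nonneg fun σ _ => mul_nonneg (occ_nonneg Λ σ i) (hnsq0 σ)
  have hκ : (0:ℝ) < (2 * Δ)⁻¹ := by positivity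
  have h5 : (2 * Δ)⁻¹ * Q ≤ (2 * Δ)⁻¹ * S3 := mul_le_mul_of_nonneg_left hQ hκ.le
  have hΔne : Δ ≠ 0 := ne_of_gt hΔ0
  have e1 : -S2 - (2 * Δ)⁻¹ * Q + S1 + lam * S4 - (1 - 1 / Δ) * (S1 - S2)
      = (2 * Δ)⁻¹ * (2 * S1 - 2 * S2 - S3) + ((2 * Δ)⁻¹ * S3 - (2 * Δ)⁻¹ * Q) + lam * S4 := by
    field_simp
    ring
  have hlam4 : 0 ≤ lam * S4 := mul_nonneg hlam hS4'
  have hfirst : 0 ≤ (2 * Δ)⁻¹ * (2 * S1 - 2 * S2 - S3) := mul_nonneg hκ.le hbr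
  linarith [e1]

end XXZ

namespace XXZ

variable (Λ : Finset ℤ)

lemma main_pos (Δ lam : ℝ) (hΔ : 1 < Δ) (hlam : 0 ≤ lam) (ω : ℤ → ℝ)
    (hω : ∀ i ∈ Λ, 0 ≤ ω i) :
    (toOp Λ (HonMat Λ Δ lam ω Λ - ((1 - 1 / Δ : ℝ) : ℂ) •
      ((∑ i ∈ Λ, NMat Λ i) -
        ∑ i ∈ Λ.filter (fun i => i + 1 ∈ Λ), NMat Λ i * NMat Λ (i + 1)))).IsPositive := by
  constructor
  · rw [← ContinuousLinearMap.isSelfAdjoint_iff_isSymmetric]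
    show star _ = _
    unfold toOp
    rw [← map_star]
    congr 1
    rw [Matrix.star_eq_conjTranspose]
    exact Dmat_herm Λ Δ lam ω
  · intro x
    rw [bridge]
    exact qform_nonneg Λ Δ lam hΔ hlam ω hω _

end XXZ

namespace XXZ

/-- the operator bound \eqref{H0W}: `(1-1/Δ)W^Λ ≤ H_0^Λ ≤ H^Λ`. -/
theorem W_le_H0
    (Λ : Finset ℤ) (hΛ : Λ.Nonempty) (hΛi : IsInterval Λ) (Δ : ℝ) (hΔ : 1 < Δ) :
    (H0Op Λ Δ - ((1 - 1 / Δ : ℝ) : ℂ) • WOp Λ).IsPositive ∧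
    ∀ lam : ℝ, 0 < lam → ∀ ω : ℤ → ℝ, (∀ i ∈ Λ, 0 ≤ ω i) →
      (HOp Λ Δ lam ω - ((1 - 1 / Δ : ℝ) : ℂ) • WOp Λ).IsPositive := by
  constructor
  · have h := main_pos Λ Δ 0 hΔ le_rfl (fun _ => 0) (fun i _ => le_rfl)
    have e : H0Op Λ Δ - ((1 - 1 / Δ : ℝ) : ℂ) • WOp Λ
        = toOp Λ (HonMat Λ Δ 0 (fun _ => 0) Λ - ((1 - 1 / Δ : ℝ) : ℂ) •
          ((∑ i ∈ Λ, NMat Λ i) -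
            ∑ i ∈ Λ.filter (fun i => i + 1 ∈ Λ), NMat Λ i * NMat Λ (i + 1))) := by
      rw [show HonMat Λ Δ 0 (fun _ => 0) Λ
          = (∑ i ∈ Λ.filter (fun i => i + 1 ∈ Λ), hMat Λ Δ i) + ∑ i ∈ Λ, NMat Λ i from by
        simp [HonMat]]
      unfold H0Op WOp toOp
      simp only [map_sub, _root_.map_smul]
    rw [e]; exact h
  · intro lam hlam ω hω
    have h := main_pos Λ Δ lam hΔ hlam.le ω hω
    have e : HOp Λ Δ lam ω - ((1 - 1 / Δ : ℝ) : ℂ) • WOp Λ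
        = toOp Λ (HonMat Λ Δ lam ω Λ - ((1 - 1 / Δ : ℝ) : ℂ) •
          ((∑ i ∈ Λ, NMat Λ i) -
            ∑ i ∈ Λ.filter (fun i => i + 1 ∈ Λ), NMat Λ i * NMat Λ (i + 1))) := by
      unfold HOp WOp toOp
      simp only [map_sub, _root_.map_smul]
    rw [e]; exact h

end XXZ
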